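/- If T_n = Q_nᵀ𝒜Q_n and p_n = Q_n T_n⁻¹ e_n, then 𝒜p_n lies in q_n + span{q_j : j > n}; in particular ⟨q_j, 𝒜p_n⟩ = 0 for j < n and ⟨q_n, 𝒜p_n⟩ = 1. -/

import Mathlib

lemma span_orth {X : Type*} [NormedAddCommGroup X] [InnerProductSpace ℝ X]
    (S : Set X) (x : X) (h : ∀ v ∈ S, (inner ℝ x v : ℝ) = 0) :
    ∀ y ∈ Submodule.span ℝ S, (inner ℝ x y : ℝ) = 0 := by
  intro y hy
  induction hy using Submodule.span_induction with
  | mem v hv => exact h v hv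
  | zero => simp
  | add a b _ _ ha hb => rw [inner_add_right, ha, hb]; ring
  | smul c a _ ha => rw [real_inner_smul_right, ha]; ring

/-- If T_n = Q_nᵀ𝒜Q_n and p_n = Q_n T_n⁻¹ e_n (q₁,…,q_N an orthonormal
basis of the 𝒜-invariant space), then 𝒜p_n ∈ q_n + span{q_j : j > n}; in particular
⟨q_j, 𝒜p_n⟩ = 0 for j < n and ⟨q_n, 𝒜p_n⟩ = 1. -/
theorem stmt_15 {X : Type*} [NormedAddCommGroup X] [InnerProductSpace ℝ X]
    [FiniteDimensional ℝ X]
    (𝒜 : Module.End ℝ X) (hsym : ∀ x y : X, (inner ℝ (𝒜 x) y : ℝ) = inner ℝ x (𝒜 y))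
    (N : ℕ) (q : ℕ → X)
    (hON : ∀ i j, 1 ≤ i → i ≤ N → 1 ≤ j → j ≤ N →
      (inner ℝ (q i) (q j) : ℝ) = if i = j then 1 else 0)
    (hspan : Submodule.span ℝ {v : X | ∃ i, 1 ≤ i ∧ i ≤ N ∧ v = q i} = ⊤)
    (n : ℕ) (hn : 1 ≤ n) (hnN : n ≤ N)
    (dn : Fin n → ℝ)
    (hdn : ∀ i : Fin n, ∑ j : Fin n,
        (inner ℝ (q ((i : ℕ) + 1)) (𝒜 (q ((j : ℕ) + 1))) : ℝ) * dn j =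
      if (i : ℕ) = n - 1 then 1 else 0)
    (p : X) (hpdef : p = ∑ j : Fin n, dn j • q ((j : ℕ) + 1)) :
    𝒜 p - q n ∈ Submodule.span ℝ {v : X | ∃ j, n + 1 ≤ j ∧ j ≤ N ∧ v = q j} ∧
    (∀ j, 1 ≤ j → j < n → (inner ℝ (q j) (𝒜 p) : ℝ) = 0) ∧
    (inner ℝ (q n) (𝒜 p) : ℝ) = 1 := by
  -- key computation
  have key : ∀ i, 1 ≤ i → i ≤ n → (inner ℝ (q i) (𝒜 p) : ℝ) = if i = n then 1 else 0 := by
    intro i hi1 hin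
    have hAp : 𝒜 p = ∑ j : Fin n, dn j • 𝒜 (q ((j : ℕ) + 1)) := by
      rw [hpdef, map_sum]; simp
    rw [hAp, inner_sum]
    simp only [real_inner_smul_right]
    have hi : i = (⟨i - 1, by omega⟩ : Fin n) + 1 := by simp; omega
    have hidx : ((⟨i-1, by omega⟩ : Fin n) : ℕ) + 1 = i := by
      simp only [Fin.val_mk]; omega
    calc ∑ j : Fin n, dn j * (inner ℝ (q i) (𝒜 (q ((j:ℕ)+1))) : ℝ)
        = ∑ j : Fin n, (inner ℝ (q (((⟨i-1, by omega⟩ : Fin n) : ℕ)+1)) (𝒜 (q ((j:ℕ)+1))) : ℝ) * dn j := by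
          apply Finset.sum_congr rfl; intro j _
          rw [mul_comm, hidx]
      _ = if ((⟨i-1, by omega⟩ : Fin n) : ℕ) = n - 1 then 1 else 0 := hdn _
      _ = if i = n then 1 else 0 := by
          simp only [Fin.val_mk]
          by_cases h : i = n <;> simp [h] <;> omega
  have key2 : ∀ j, 1 ≤ j → j < n → (inner ℝ (q j) (𝒜 p) : ℝ) = 0 := by
    intro j h1 h2
    rw [key j h1 (le_of_lt h2)]
    simp [Nat.ne_of_lt h2]
  have key3 : (inner ℝ (q n) (𝒜 p) : ℝ) = 1 := by rw [key n hn le_rfl]; simp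
  refine ⟨?_, key2, key3⟩
  -- membership part
  set S₁ : Set X := {v : X | ∃ i, 1 ≤ i ∧ i ≤ n ∧ v = q i} with hS₁
  set S₂ : Set X := {v : X | ∃ j, n + 1 ≤ j ∧ j ≤ N ∧ v = q j} with hS₂
  have hun : {v : X | ∃ i, 1 ≤ i ∧ i ≤ N ∧ v = q i} = S₁ ∪ S₂ := by
    ext v
    simp only [Set.mem_setOf_eq, Set.mem_union, hS₁, hS₂]
    constructor
    · rintro ⟨i, h1, h2, rfl⟩
      by_cases h : i ≤ n
      · exact Or.inl ⟨i, h1, h, rfl⟩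
      · exact Or.inr ⟨i, by omega, h2, rfl⟩
    · rintro (⟨i, h1, h2, rfl⟩ | ⟨i, h1, h2, rfl⟩)
      · exact ⟨i, h1, by omega, rfl⟩
      · exact ⟨i, by omega, h2, rfl⟩
  have hsup : Submodule.span ℝ S₁ ⊔ Submodule.span ℝ S₂ = ⊤ := by
    rw [← Submodule.span_union, ← hun, hspan]
  set y : X := 𝒜 p - q n with hy
  have hy_mem : y ∈ Submodule.span ℝ S₁ ⊔ Submodule.span ℝ S₂ := by
    rw [hsup]; trivial
  obtain ⟨a, ha, b, hb, hab⟩ := Submodule.mem_sup.mp hy_mem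
  -- y is orthogonal to all q i, 1 ≤ i ≤ n
  have hyq : ∀ i, 1 ≤ i → i ≤ n → (inner ℝ (q i) y : ℝ) = 0 := by
    intro i h1 h2
    rw [hy, inner_sub_right, key i h1 h2, hON i n h1 (le_trans h2 hnN) hn hnN]
    by_cases h : i = n <;> simp [h]
  -- b orthogonal to all q i, i ≤ n
  have hbq : ∀ i, 1 ≤ i → i ≤ n → (inner ℝ (q i) b : ℝ) = 0 := by
    intro i h1 h2
    apply span_orth S₂ (q i) _ b hb
    rintro v ⟨j, hj1, hj2, rfl⟩
    rw [hON i j h1 (by omega) (by omega) hj2]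
    simp; omega
  have haq : ∀ i, 1 ≤ i → i ≤ n → (inner ℝ (q i) a : ℝ) = 0 := by
    intro i h1 h2
    have := hyq i h1 h2
    rw [← hab, inner_add_right, hbq i h1 h2] at this
    linarith
  have ha0 : a = 0 := by
    have : (inner ℝ a a : ℝ) = 0 := by
      apply span_orth S₁ a _ a ha
      rintro v ⟨i, h1, h2, rfl⟩
      rw [real_inner_comm]
      exact haq i h1 h2
    exact inner_self_eq_zero.mp this
  rw [ha0, zero_add] at hab
  rw [← hab]; exact hb
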